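/- For any partition λ of n and any integer m with ℓ(λ) ≤ m ≤ n − (λ₁ − 1), there exists a quasi-Yamanouchi tableau of shape λ whose maximum entry is exactly m. -/

import Mathlib

open YoungDiagram

/-- Entries of `T` are all `< m`.  Entries are 0-based: the value `v` represents the
positive integer `v + 1`, so this says all (1-based) entries are at most `m`. -/
def EntryLE (μ : YoungDiagram) (T : SemistandardYoungTableau μ) (m : ℕ) : Prop :=
  ∀ i j : ℕ, (i, j) ∈ μ → T i j < m

/-- `T` is quasi-Yamanouchi: whenever a value `v > 0` appears, the leftmost
occurrence of `v` is weakly left of some occurrence of `v - 1`; equivalently some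
occurrence of `v` is weakly left of some occurrence of `v - 1`. -/
def IsQY (μ : YoungDiagram) (T : SemistandardYoungTableau μ) : Prop :=
  ∀ v : ℕ, 0 < v → (∃ i j : ℕ, (i, j) ∈ μ ∧ T i j = v) →
    ∃ i j i' j' : ℕ, (i, j) ∈ μ ∧ (i', j') ∈ μ ∧ T i j = v ∧ T i' j' = v - 1 ∧ j ≤ j'

/-- The maximum (1-based) entry of `T` is exactly `m`: all entries are `< m`
(0-based) and the value `m - 1` appears. -/
def MaxEq (μ : YoungDiagram) (T : SemistandardYoungTableau μ) (m : ℕ) : Prop :=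
  EntryLE μ T m ∧ ∃ i j : ℕ, (i, j) ∈ μ ∧ T i j = m - 1

/-- The number of quasi-Yamanouchi tableaux of shape `μ` with maximum entry exactly `m`. -/
noncomputable def QYTeq (μ : YoungDiagram) (m : ℕ) : ℕ :=
  Nat.card {T : SemistandardYoungTableau μ // IsQY μ T ∧ MaxEq μ T m}

/-- The number of semistandard Young tableaux of shape `μ` with entries at most `m`. -/
noncomputable def SSYTle (μ : YoungDiagram) (m : ℕ) : ℕ :=
  Nat.card {T : SemistandardYoungTableau μ // EntryLE μ T m}

/-- `T` is a standard Young tableau: each of the values `0, …, μ.card - 1`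
(representing `1, …, n`) appears exactly once. -/
def IsSYT (μ : YoungDiagram) (T : SemistandardYoungTableau μ) : Prop :=
  ∀ v : ℕ, v < μ.card → ∃! p : ℕ × ℕ, p ∈ μ ∧ T p.1 p.2 = v

/-- The number of standard Young tableaux of shape `μ`. -/
noncomputable def SYTcount (μ : YoungDiagram) : ℕ :=
  Nat.card {T : SemistandardYoungTableau μ // IsSYT μ T}

/-- The descent set of a standard tableau, in the paper's 1-based labelling:
`d ∈ Des T` iff `1 ≤ d ≤ n - 1` and the (1-based) entry `d + 1` (0-based value `d`)
appears weakly left of the (1-based) entry `d` (0-based value `d - 1`). -/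
def Des (μ : YoungDiagram) (T : SemistandardYoungTableau μ) : Set ℕ :=
  {d | 1 ≤ d ∧ d ≤ μ.card - 1 ∧
    ∃ i j i' j' : ℕ, (i, j) ∈ μ ∧ (i', j') ∈ μ ∧ T i j = d ∧ T i' j' = d - 1 ∧ j ≤ j'}

/-- One destandardization step at value `v`: every occurrence of `v` lies strictly
right of every occurrence of `v - 1` (in particular vacuously if no `v - 1` appears),
and `T'` is obtained from `T` by decrementing every entry equal to `v` to `v - 1`. -/
def StepAt (μ : YoungDiagram) (T T' : SemistandardYoungTableau μ) (v : ℕ) : Prop :=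
  0 < v ∧ (∃ i j : ℕ, (i, j) ∈ μ ∧ T i j = v) ∧
    (∀ i j i' j' : ℕ, (i, j) ∈ μ → (i', j') ∈ μ → T i j = v → T i' j' = v - 1 → j' < j) ∧
    (∀ i j : ℕ, (i, j) ∈ μ → T' i j = if T i j = v then v - 1 else T i j)

/-- One destandardization step (at some value). -/
def Step (μ : YoungDiagram) (T T' : SemistandardYoungTableau μ) : Prop :=
  ∃ v : ℕ, StepAt μ T T' v

/-- `Q` is the destandardization of `T`: it is reachable from `T` by destandardization
steps and no further step applies to it. -/
def IsDst (μ : YoungDiagram) (T Q : SemistandardYoungTableau μ) : Prop :=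
  Relation.ReflTransGen (Step μ) T Q ∧ ∀ Q' : SemistandardYoungTableau μ, ¬ Step μ Q Q'

/-- The hook length of the box in row `i`, column `j` of `μ`. -/
def hookLength (μ : YoungDiagram) (i j : ℕ) : ℕ :=
  (μ.rowLen i - j) + (μ.colLen j - i) - 1

/-- The hook-content product `∏_{u ∈ μ} (k + c(u)) / h(u)` where `c(u)` is the
content (column minus row) and `h(u)` the hook length. -/
noncomputable def hookContent (μ : YoungDiagram) (k : ℕ) : ℚ :=
  ∏ c ∈ μ.cells, ((k : ℚ) + (c.2 : ℚ) - (c.1 : ℚ)) / (hookLength μ c.1 c.2 : ℚ)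

/-- `μ` is the partition `(l1, l2, 2^{h2-2}, 1^{h1-h2})`: first row `l1`, second row
`l2`, rows `2, …, h2 - 1` of length `2`, rows `h2, …, h1 - 1` of length `1`, and no
other rows; so the first column has height `h1` and the second column height `h2`. -/
def HasRows2 (μ : YoungDiagram) (l1 l2 h1 h2 : ℕ) : Prop :=
  μ.rowLen 0 = l1 ∧ μ.rowLen 1 = l2 ∧
    (∀ i : ℕ, 2 ≤ i → i < h2 → μ.rowLen i = 2) ∧
    (∀ i : ℕ, h2 ≤ i → i < h1 → μ.rowLen i = 1) ∧
    (∀ i : ℕ, h1 ≤ i → μ.rowLen i = 0)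


/-- Column offset used to build the quasi-Yamanouchi tableau. -/
def qoff (μ : YoungDiagram) (m j : ℕ) : ℕ :=
  min (∑ j' ∈ Finset.range j, (μ.colLen j' - 1)) (m - μ.colLen j)

lemma qoff_zero (μ : YoungDiagram) (m : ℕ) : qoff μ m 0 = 0 := by
  simp [qoff]

lemma qoff_mono (μ : YoungDiagram) (m : ℕ) {j1 j2 : ℕ} (h : j1 ≤ j2) :
    qoff μ m j1 ≤ qoff μ m j2 := by
  apply min_le_min
  · exact Finset.sum_le_sum_of_subset (Finset.range_subset_range.2 h)
  · exact Nat.sub_le_sub_left (μ.colLen_anti j1 j2 h) m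

lemma qoff_succ_le (μ : YoungDiagram) (m : ℕ) (j : ℕ) (hm : μ.colLen 0 ≤ m)
    (hj : 0 < μ.colLen (j + 1)) :
    qoff μ m (j + 1) ≤ qoff μ m j + (μ.colLen j - 1) := by
  have hS : ∑ j' ∈ Finset.range (j+1), (μ.colLen j' - 1)
      = (∑ j' ∈ Finset.range j, (μ.colLen j' - 1)) + (μ.colLen j - 1) :=
    Finset.sum_range_succ _ _
  have h1 : μ.colLen (j+1) ≤ μ.colLen j := μ.colLen_anti j (j+1) (by omega)
  have h2 : μ.colLen j ≤ μ.colLen 0 := μ.colLen_anti 0 j (by omega)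
  unfold qoff
  omega

/-- The quasi-Yamanouchi tableau of shape `μ` with maximum entry `m`. -/
def qtab (μ : YoungDiagram) (m : ℕ) : SemistandardYoungTableau μ where
  entry i j := if (i, j) ∈ μ then i + qoff μ m j else 0
  row_weak' := by
    intro i j1 j2 hj hmem
    have h1 : (i, j1) ∈ μ := μ.up_left_mem le_rfl hj.le hmem
    simp only [if_pos h1, if_pos hmem]
    exact Nat.add_le_add le_rfl (qoff_mono μ m hj.le)
  col_strict' := by
    intro i1 i2 j hi hmem
    have h1 : (i1, j) ∈ μ := μ.up_left_mem hi.le le_rfl hmem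
    simp only [if_pos h1, if_pos hmem]
    omega
  zeros' := by
    intro i j h
    simp [h]

lemma qtab_apply (μ : YoungDiagram) (m i j : ℕ) (h : (i, j) ∈ μ) :
    qtab μ m i j = i + qoff μ m j := if_pos h

lemma card_eq_sum_colLens (μ : YoungDiagram) :
    μ.card = ∑ j ∈ Finset.range (μ.rowLen 0), μ.colLen j := by
  have := Finset.card_eq_sum_card_fiberwise (s := μ.cells)
    (t := Finset.range (μ.rowLen 0)) (f := Prod.snd) ?_
  · rw [show μ.card = μ.cells.card from rfl, this]
    apply Finset.sum_congr rfl
    intro j _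
    rw [μ.colLen_eq_card]
    rfl
  · intro c hc
    rw [Finset.mem_coe, Finset.mem_range, ← mem_iff_lt_rowLen]
    exact μ.up_left_mem (Nat.zero_le _) le_rfl (by simpa using hc)

lemma qtab_key (μ : YoungDiagram) (m : ℕ) (hm : μ.colLen 0 ≤ m) :
    ∀ j i, (i, j) ∈ μ → 0 < i + qoff μ m j →
      ∃ i' j', (i', j') ∈ μ ∧ 1 ≤ i' ∧ i' + qoff μ m j' = i + qoff μ m j ∧ j' ≤ j := by
  intro j
  induction j with
  | zero =>
    intro i h hpos
    exact ⟨i, 0, h, by simp only [qoff_zero] at hpos ⊢; omega, rfl, le_rfl⟩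
  | succ j ih =>
    intro i hmem hpos
    rcases Nat.eq_zero_or_pos i with rfl | hi
    · have hj0 : (0, j) ∈ μ := μ.up_left_mem le_rfl (by omega) hmem
      have hcol : 0 < μ.colLen (j + 1) := by
        rw [mem_iff_lt_colLen] at hmem; omega
      have hcolj : 0 < μ.colLen j := by
        rw [mem_iff_lt_colLen] at hj0; omega
      have hle := qoff_succ_le μ m j hm hcol
      have hmono : qoff μ m j ≤ qoff μ m (j + 1) := qoff_mono μ m (by omega)
      rcases eq_or_lt_of_le hmono with heq | hlt
      · obtain ⟨i', j', h1, h2, h3, h4⟩ := ih 0 hj0 (by omega)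
        exact ⟨i', j', h1, h2, by omega, by omega⟩
      · set r := qoff μ m (j + 1) - qoff μ m j with hr
        have hr1 : 1 ≤ r := by omega
        have hr2 : r < μ.colLen j := by omega
        exact ⟨r, j, mem_iff_lt_colLen.2 hr2, hr1, by omega, by omega⟩
    · exact ⟨i, j + 1, hmem, hi, rfl, le_rfl⟩

theorem qyt_exists_aux (μ : YoungDiagram) (hμ : 0 < μ.card) (m : ℕ)
    (h1 : μ.colLen 0 ≤ m) (h2 : m ≤ μ.card - (μ.rowLen 0 - 1)) :
    ∃ T : SemistandardYoungTableau μ, (∀ v : ℕ, 0 < v → (∃ i j : ℕ, (i, j) ∈ μ ∧ T i j = v) →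
    ∃ i j i' j' : ℕ, (i, j) ∈ μ ∧ (i', j') ∈ μ ∧ T i j = v ∧ T i' j' = v - 1 ∧ j ≤ j') ∧
    ((∀ i j : ℕ, (i, j) ∈ μ → T i j < m) ∧ ∃ i j : ℕ, (i, j) ∈ μ ∧ T i j = m - 1) := by
  have h00 : (0, 0) ∈ μ := by
    obtain ⟨⟨i, j⟩, hc⟩ := Finset.card_pos.1 hμ
    exact μ.up_left_mem (Nat.zero_le _) (Nat.zero_le _) (by simpa using hc)
  set L := μ.rowLen 0 with hLdef
  have hL : 0 < L := by rw [hLdef, ← mem_iff_lt_rowLen]; exact h00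
  have hlastmem : (0, L - 1) ∈ μ := mem_iff_lt_rowLen.2 (by omega)
  have hlcol : 0 < μ.colLen (L - 1) := by rw [← mem_iff_lt_colLen]; exact hlastmem
  have hcard := card_eq_sum_colLens μ
  rw [← hLdef] at hcard
  have hsplit : ∑ j ∈ Finset.range L, μ.colLen j
      = ∑ j ∈ Finset.range (L - 1), μ.colLen j + μ.colLen (L - 1) := by
    conv_lhs => rw [show L = (L - 1) + 1 by omega]
    exact Finset.sum_range_succ _ _
  have hA : ∑ j ∈ Finset.range (L - 1), μ.colLen j
      ≤ (∑ j ∈ Finset.range (L - 1), (μ.colLen j - 1)) + (L - 1) := by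
    calc ∑ j ∈ Finset.range (L - 1), μ.colLen j
        ≤ ∑ j ∈ Finset.range (L - 1), (μ.colLen j - 1 + 1) := by
          apply Finset.sum_le_sum
          intro j hj
          have hjm : (0, j) ∈ μ := mem_iff_lt_rowLen.2 (by
            rw [Finset.mem_range] at hj; omega)
          have := mem_iff_lt_colLen.1 hjm
          omega
      _ = _ := by
          rw [Finset.sum_add_distrib, Finset.sum_const, Finset.card_range, smul_eq_mul, mul_one]
  have hkey : m - μ.colLen (L - 1) ≤ ∑ j ∈ Finset.range (L - 1), (μ.colLen j - 1) := by omega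
  have hofflast : qoff μ m (L - 1) = m - μ.colLen (L - 1) := min_eq_right hkey
  refine ⟨qtab μ m, ?_, ?_, ?_⟩
  · intro v hv hex
    obtain ⟨i, j, hmem, hval⟩ := hex
    rw [qtab_apply μ m i j hmem] at hval
    obtain ⟨i', j', h1', h2', h3', _⟩ := qtab_key μ m h1 j i hmem (by omega)
    have hup : (i' - 1, j') ∈ μ := μ.up_left_mem (by omega) le_rfl h1'
    refine ⟨i', j', i' - 1, j', h1', hup, ?_, ?_, le_rfl⟩
    · rw [qtab_apply μ m _ _ h1']; omega
    · rw [qtab_apply μ m _ _ hup]; omega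
  · intro i j hmem
    rw [qtab_apply μ m i j hmem]
    have hij : i < μ.colLen j := mem_iff_lt_colLen.1 hmem
    have hja : μ.colLen j ≤ μ.colLen 0 := μ.colLen_anti 0 j (Nat.zero_le _)
    have hq : qoff μ m j ≤ m - μ.colLen j := min_le_right _ _
    omega
  · refine ⟨μ.colLen (L - 1) - 1, L - 1, mem_iff_lt_colLen.2 (by omega), ?_⟩
    rw [qtab_apply μ m _ _ (mem_iff_lt_colLen.2 (by omega))]
    have hcle : μ.colLen (L - 1) ≤ μ.colLen 0 := μ.colLen_anti _ _ (Nat.zero_le _)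
    omega

/-- For any partition `λ` of `n` and any `m` with
`ℓ(λ) ≤ m ≤ n - (λ₁ - 1)`, there is a quasi-Yamanouchi tableau of shape `λ`
with maximum entry exactly `m`. -/
theorem qyt_exists_of_max_entry (μ : YoungDiagram) (hμ : 0 < μ.card) (m : ℕ)
    (h1 : μ.colLen 0 ≤ m) (h2 : m ≤ μ.card - (μ.rowLen 0 - 1)) :
    ∃ T : SemistandardYoungTableau μ, IsQY μ T ∧ MaxEq μ T m := by
  obtain ⟨T, hq, hle, hex⟩ := qyt_exists_aux μ hμ m h1 h2
  exact ⟨T, hq, hle, hex⟩
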